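/- The sequence E(s) = (2/2^s)·⌈s/2⌉·C(s,⌈s/2⌉)/√s converges to √(2/π) as s → ∞. -/

import Mathlib

open Filter Real Nat

private lemma stmt7_interleave {f : ℕ → ℝ} {l : ℝ}
    (he : Filter.Tendsto (fun n => f (2*n)) Filter.atTop (nhds l))
    (ho : Filter.Tendsto (fun n => f (2*n+1)) Filter.atTop (nhds l)) :
    Filter.Tendsto f Filter.atTop (nhds l) := by
  rw [Metric.tendsto_atTop] at he ho ⊢
  intro ε hε
  obtain ⟨N₁, h₁⟩ := he ε hε
  obtain ⟨N₂, h₂⟩ := ho ε hε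
  refine ⟨2*N₁ + 2*N₂ + 1, fun n hn => ?_⟩
  rcases Nat.even_or_odd n with ⟨k, hk⟩ | ⟨k, hk⟩
  · have : n = 2*k := by omega
    rw [this]
    exact h₁ k (by omega)
  · rw [hk]
    exact h₂ k (by omega)

private lemma stmt7_identity (n : ℕ) (hn : 1 ≤ n) :
    (Nat.choose (2*n) n : ℝ) * Real.sqrt n / 4^n
      = Stirling.stirlingSeq (2*n) / (Stirling.stirlingSeq n)^2 := by
  have hn0 : (0:ℝ) < n := by exact_mod_cast hn
  have hfac : (0:ℝ) < (n ! : ℝ) := by exact_mod_cast Nat.factorial_pos n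
  have hs : (0:ℝ) < Real.sqrt (2*n) := Real.sqrt_pos.2 (by positivity)
  have hss : Real.sqrt (2*(n:ℝ)) ^ 2 = 2*n := Real.sq_sqrt (by positivity)
  have h4 : Real.sqrt (2*(2*(n:ℝ))) = 2 * Real.sqrt n := by
    rw [show 2*(2*(n:ℝ)) = 2^2 * n by ring, Real.sqrt_mul (by positivity),
      Real.sqrt_sq (by norm_num)]
  have hsub : 2*n - n = n := by omega
  have hch : (Nat.choose (2*n) n : ℝ) = ((2*n)! : ℝ) / ((n ! : ℝ) * (n ! : ℝ)) := by
    rw [Nat.cast_choose ℝ (by omega), hsub]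
  have he : (0:ℝ) < Real.exp 1 := Real.exp_pos 1
  have hsn : (0:ℝ) < Real.sqrt n := Real.sqrt_pos.2 hn0
  unfold Stirling.stirlingSeq
  rw [hch]
  push_cast
  rw [h4]
  rw [div_eq_div_iff (by positivity) (by positivity)]
  rw [div_pow, mul_pow, hss, div_pow]
  field_simp
  have hsq : Real.sqrt (n:ℝ) * Real.sqrt n = n := Real.mul_self_sqrt hn0.le
  have h5 : ((2:ℝ)*(n:ℝ))^(2*n) = 4^n*((n:ℝ)^n)^2 := by
    rw [mul_pow, pow_mul, pow_mul']
    norm_num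
  have hexp : Real.exp (n:ℝ) ^ 2 = Real.exp (2*(n:ℝ)) := by
    rw [two_mul, Real.exp_add, sq]
  have he2 : Real.exp 1 ^ (2*n) ≠ 0 := by positivity
  rw [div_pow, h5, ← pow_mul, mul_comm n 2, Real.sq_sqrt hn0.le, mul_assoc, mul_div_cancel₀ _ he2]
  ring

private lemma stmt7_key :
    Filter.Tendsto (fun n : ℕ => (Nat.choose (2*n) n : ℝ) * Real.sqrt n / 4^n)
      Filter.atTop (nhds (1 / Real.sqrt Real.pi)) := by
  have h2 : Filter.Tendsto (fun n : ℕ => 2*n) Filter.atTop Filter.atTop :=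
    Filter.tendsto_atTop_atTop.2 fun b => ⟨b, fun a ha => by omega⟩
  have hst := Stirling.tendsto_stirlingSeq_sqrt_pi
  have h2n : Filter.Tendsto (fun n : ℕ => Stirling.stirlingSeq (2*n)) Filter.atTop
      (nhds (Real.sqrt Real.pi)) := hst.comp h2
  have hpi : (0:ℝ) < Real.sqrt Real.pi := Real.sqrt_pos.2 Real.pi_pos
  have hd : Filter.Tendsto
      (fun n : ℕ => Stirling.stirlingSeq (2*n) / (Stirling.stirlingSeq n)^2) Filter.atTop
      (nhds (Real.sqrt Real.pi / (Real.sqrt Real.pi)^2)) :=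
    h2n.div (hst.pow 2) (by positivity)
  have : Real.sqrt Real.pi / (Real.sqrt Real.pi)^2 = 1 / Real.sqrt Real.pi := by
    field_simp
  rw [this] at hd
  refine hd.congr' ?_
  filter_upwards [Filter.eventually_ge_atTop 1] with n hn
  exact (stmt7_identity n hn).symm

theorem stmt7 :
    Filter.Tendsto
      (fun s : ℕ => 2 / 2 ^ s * ⌈(s : ℝ) / 2⌉₊ * s.choose ⌈(s : ℝ) / 2⌉₊ / Real.sqrt s)
      Filter.atTop (nhds (Real.sqrt (2 / Real.pi))) := by
  have hpi : (0:ℝ) < Real.sqrt Real.pi := Real.sqrt_pos.2 Real.pi_pos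
  have hlim : Real.sqrt (2 / Real.pi) = Real.sqrt 2 * (1 / Real.sqrt Real.pi) := by
    rw [Real.sqrt_div (by norm_num : (0:ℝ) ≤ 2)]
    ring
  rw [hlim]
  apply stmt7_interleave
  · -- even case
    have h : Filter.Tendsto (fun n : ℕ => Real.sqrt 2 * ((Nat.choose (2*n) n : ℝ) * Real.sqrt n / 4^n))
        Filter.atTop (nhds (Real.sqrt 2 * (1 / Real.sqrt Real.pi))) :=
      stmt7_key.const_mul _
    refine h.congr' ?_
    filter_upwards [Filter.eventually_ge_atTop 1] with n hn
    have hn0 : (0:ℝ) < n := by exact_mod_cast hn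
    have hceil : ⌈((2*n : ℕ) : ℝ) / 2⌉₊ = n := by
      rw [show ((2*n : ℕ) : ℝ)/2 = (n:ℝ) by push_cast; ring, Nat.ceil_natCast]
    simp only [hceil]
    have hs2 : Real.sqrt ((2*n : ℕ) : ℝ) = Real.sqrt 2 * Real.sqrt n := by
      push_cast
      rw [Real.sqrt_mul (by norm_num)]
    rw [hs2]
    have hsq2 : Real.sqrt 2 * Real.sqrt 2 = 2 := Real.mul_self_sqrt (by norm_num)
    have hsqn : Real.sqrt (n:ℝ) * Real.sqrt n = n := Real.mul_self_sqrt hn0.le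
    have h2p : ((2:ℝ))^(2*n) = 4^n := by
      rw [pow_mul]; norm_num
    have hs2p : (0:ℝ) < Real.sqrt 2 := by positivity
    have hsnp : (0:ℝ) < Real.sqrt n := Real.sqrt_pos.2 hn0
    rw [h2p]
    field_simp
    ring_nf
    rw [Real.sq_sqrt (by norm_num : (0:ℝ) ≤ 2), Real.sq_sqrt hn0.le]
    ring
  · -- odd case
    have hg : Filter.Tendsto (fun n : ℕ => Real.sqrt ((2*(n:ℝ)+1) / n)) Filter.atTop
        (nhds (Real.sqrt 2)) := by
      have hb : Filter.Tendsto (fun n : ℕ => (2*(n:ℝ)+1) / n) Filter.atTop (nhds 2) := by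
        have h1 : Filter.Tendsto (fun n : ℕ => 2 + 1/(n:ℝ)) Filter.atTop (nhds (2 + 0)) :=
          tendsto_const_nhds.add tendsto_one_div_atTop_nhds_zero_nat
      
        rw [show (2:ℝ) = 2 + 0 by ring]
        refine h1.congr' ?_
        filter_upwards [Filter.eventually_ge_atTop 1] with n hn
        have hn0 : (0:ℝ) < n := by exact_mod_cast hn
        field_simp
        ring
      exact (Real.continuous_sqrt.tendsto 2).comp hb
    have h : Filter.Tendsto
        (fun n : ℕ => ((Nat.choose (2*n) n : ℝ) * Real.sqrt n / 4^n) * Real.sqrt ((2*(n:ℝ)+1) / n))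
        Filter.atTop (nhds ((1 / Real.sqrt Real.pi) * Real.sqrt 2)) := stmt7_key.mul hg
    rw [mul_comm] at h
    refine h.congr' ?_
    filter_upwards [Filter.eventually_ge_atTop 1] with n hn
    have hn0 : (0:ℝ) < n := by exact_mod_cast hn
    have hceil : ⌈((2*n+1 : ℕ) : ℝ) / 2⌉₊ = n + 1 := by
      rw [Nat.ceil_eq_iff (Nat.succ_ne_zero n)]
      simp only [Nat.succ_sub_one]
      push_cast
      constructor <;> linarith
    simp only [hceil]
    have hchoose : ((n:ℝ)+1) * ((2*n+1).choose (n+1) : ℝ) = (2*(n:ℝ)+1) * ((2*n).choose n : ℝ) := by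
      have := Nat.add_one_mul_choose_eq (2*n) n
      have h2 : (2*n+1) * ((2*n).choose n) = ((2*n+1).choose (n+1)) * (n+1) := by
        simpa [Nat.succ_eq_add_one] using this
      have := congrArg (fun k : ℕ => (k : ℝ)) h2
      push_cast at this
      linarith
    have hsodd : Real.sqrt ((2*n+1 : ℕ) : ℝ) = Real.sqrt (2*(n:ℝ)+1) := by push_cast; ring_nf
    have hdivsqrt : Real.sqrt ((2*(n:ℝ)+1) / n) = Real.sqrt (2*(n:ℝ)+1) / Real.sqrt n := by
      rw [Real.sqrt_div (by positivity)]
    have hsqn : Real.sqrt (n:ℝ) * Real.sqrt n = n := Real.mul_self_sqrt hn0.le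
    have hsqo : Real.sqrt (2*(n:ℝ)+1) * Real.sqrt (2*(n:ℝ)+1) = 2*(n:ℝ)+1 :=
      Real.mul_self_sqrt (by positivity)
    have h2p : ((2:ℝ))^(2*n+1) = 2 * 4^n := by
      rw [pow_succ, pow_mul]; ring_nf
    have hsnp : (0:ℝ) < Real.sqrt n := Real.sqrt_pos.2 hn0
    have hsop : (0:ℝ) < Real.sqrt (2*(n:ℝ)+1) := Real.sqrt_pos.2 (by positivity)
    rw [hdivsqrt, hsodd]
    push_cast
    rw [h2p]
    field_simp
    linear_combination ((2*n).choose n : ℝ)*hsqo - hchoose
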